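/- Let d = 4 and suppose that for each ε ∈ (0,1), u_ε is a nonnegative twice continuously differentiable function on the domain {x ∈ ℝ^4 : |x| > ε} satisfying Δu_ε = 2 u_ε² on this domain, u_ε(x) → ∞ as |x| → ε+, and u_ε(x) → 0 as |x| → ∞. Then for every fixed x ∈ ℝ^4 \ {0}, u_ε(x) ∼ |x|^{−2} (log(1/ε))^{−1} as ε → 0; that is, (log(1/ε)) · u_ε(x) converges to |x|^{−2}. -/

import Mathlib

set_option maxHeartbeats 1000000

open MeasureTheory Filter

/-- The Laplacian of `u : ℝ⁴ → ℝ` relative to a set `s`, defined as the sum of the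
second derivatives in the coordinate directions (computed within `s`). -/
noncomputable def laplacianWithin (u : EuclideanSpace ℝ (Fin 4) → ℝ)
    (s : Set (EuclideanSpace ℝ (Fin 4))) (x : EuclideanSpace ℝ (Fin 4)) : ℝ :=
  ∑ i : Fin 4, iteratedFDerivWithin ℝ 2 u s x
    ![EuclideanSpace.single i 1, EuclideanSpace.single i 1]

local notation "E4" => EuclideanSpace ℝ (Fin 4)

noncomputable abbrev sgl (i : Fin 4) : E4 := EuclideanSpace.single i (1:ℝ)

/-- 1-d second derivative test: at a local max, the second derivative is ≤ 0. -/
lemma secondDeriv_nonpos_of_isLocalMax {g g1 : ℝ → ℝ} {a : ℝ}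
    (hg : ∀ᶠ t in nhds (0:ℝ), HasDerivAt g (g1 t) t)
    (hg1 : HasDerivAt g1 a 0) (hmax : IsLocalMax g 0) : a ≤ 0 := by
  by_contra hpos
  push_neg at hpos
  have hg10 : g1 0 = 0 := hmax.hasDerivAt_eq_zero hg.self_of_nhds
  -- slope of g1 tends to a > 0
  have hslope : Tendsto (fun t => g1 t / t) (nhdsWithin 0 {(0:ℝ)}ᶜ) (nhds a) := by
    have := hasDerivAt_iff_tendsto_slope.1 hg1
    have heq : (fun t => g1 t / t) = slope g1 0 := by
      funext t; simp [slope_def_field, hg10]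
    rw [heq]; simpa [hg10] using this
  have hev : ∀ᶠ t in nhdsWithin 0 {(0:ℝ)}ᶜ, 0 < g1 t / t :=
    hslope.eventually (eventually_gt_nhds hpos)
  rw [eventually_nhdsWithin_iff] at hev
  obtain ⟨δ1, hδ1, h1⟩ := Metric.eventually_nhds_iff.1 hev
  obtain ⟨δ2, hδ2, h2⟩ := Metric.eventually_nhds_iff.1 hg
  obtain ⟨δ3, hδ3, h3⟩ := Metric.eventually_nhds_iff.1 hmax
  set t0 : ℝ := (min δ1 (min δ2 δ3)) / 2 with ht0
  have ht0pos : 0 < t0 := by positivity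
  have ht0lt1 : t0 < δ1 := by
    have : min δ1 (min δ2 δ3) ≤ δ1 := min_le_left _ _
    simp only [ht0]; linarith
  have ht0lt2 : t0 < δ2 := by
    have h1' : min δ1 (min δ2 δ3) ≤ δ2 := le_trans (min_le_right _ _) (min_le_left _ _)
    simp only [ht0]; linarith
  have ht0lt3 : t0 < δ3 := by
    have h1' : min δ1 (min δ2 δ3) ≤ δ3 := le_trans (min_le_right _ _) (min_le_right _ _)
    simp only [ht0]; linarith
  -- MVT on [0, t0]
  have hderiv : ∀ t ∈ Set.Ioo (0:ℝ) t0, HasDerivAt g (g1 t) t := by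
    intro t ht
    apply h2
    simp only [Real.dist_eq, sub_zero]
    rw [abs_of_pos ht.1]; linarith [ht.2]
  have hcont : ContinuousOn g (Set.Icc 0 t0) := by
    intro t ht
    have : HasDerivAt g (g1 t) t := by
      apply h2
      simp only [Real.dist_eq, sub_zero]
      rw [abs_of_nonneg ht.1]; linarith [ht.2]
    exact this.continuousAt.continuousWithinAt
  obtain ⟨ξ, hξ, hξeq⟩ := exists_hasDerivAt_eq_slope g g1 ht0pos hcont hderiv
  -- g t0 ≤ g 0 from local max
  have hle : g t0 ≤ g 0 := by
    apply h3
    simp only [Real.dist_eq, sub_zero]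
    rw [abs_of_pos ht0pos]; exact ht0lt3
  -- g1 ξ > 0
  have hξpos : 0 < g1 ξ := by
    have hne : ξ ≠ 0 := ne_of_gt hξ.1
    have hd : 0 < g1 ξ / ξ :=
      h1 (by simp only [Real.dist_eq, sub_zero]; rw [abs_of_pos hξ.1]; linarith [hξ.2]) hne
    by_contra hc
    push_neg at hc
    have : g1 ξ / ξ ≤ 0 := div_nonpos_of_nonpos_of_nonneg hc (le_of_lt hξ.1)
    linarith
  rw [hξeq] at hξpos
  have : (g t0 - g 0) / (t0 - 0) ≤ 0 := by
    apply div_nonpos_of_nonpos_of_nonneg <;> linarith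
  linarith


/-- Key max principle input: at a local max, sum of second directional derivatives ≤ 0 -/
lemma sum_dir_nonpos {f : E4 → ℝ} {f1 : E4 → (E4 →L[ℝ] ℝ)} {x0 : E4} {b : Fin 4 → ℝ}
    (hf : ∀ᶠ y in nhds x0, HasFDerivAt f (f1 y) y)
    (hb : ∀ i, HasDerivAt (fun t : ℝ => f1 (x0 + t • sgl i) (sgl i)) (b i) 0)
    (hmax : IsLocalMax f x0) : ∑ i, b i ≤ 0 := by
  have key : ∀ i, b i ≤ 0 := by
    intro i
    set γ : ℝ → E4 := fun t => x0 + t • sgl i with hγdef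
    have hγd : ∀ t : ℝ, HasDerivAt γ (sgl i) t := fun t => by
      simpa [hγdef] using ((hasDerivAt_id t).smul_const (sgl i)).const_add x0
    have hγ0 : γ 0 = x0 := by simp [hγdef]
    have hγc : ContinuousAt γ 0 := (hγd 0).continuousAt
    have hev : ∀ᶠ t in nhds (0:ℝ), HasDerivAt (f ∘ γ) (f1 (γ t) (sgl i)) t := by
      have h2 : ∀ᶠ t in nhds (0:ℝ), HasFDerivAt f (f1 (γ t)) (γ t) := by
        have := hγc.preimage_mem_nhds (by rw [hγ0]; exact hf)
        filter_upwards [this] with t ht using ht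
      filter_upwards [h2] with t ht
      exact ht.comp_hasDerivAt t (hγd t)
    have hmax' : IsLocalMax (f ∘ γ) 0 := by
      have hmax2 : IsLocalMax f (γ 0) := hγ0 ▸ hmax
      exact hmax2.comp_continuous hγc
    exact secondDeriv_nonpos_of_isLocalMax hev (hb i) hmax'
  exact Finset.sum_nonpos (fun i _ => key i)

/-- Bridge: laplacianWithin on an open set for a C² function, and the directional data for u. -/
lemma u_data {Ω : Set E4} (hΩ : IsOpen Ω) {f : E4 → ℝ} (hf : ContDiffOn ℝ 2 f Ω)
    {z : E4} (hz : z ∈ Ω) :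
    (∀ᶠ y in nhds z, HasFDerivAt f (fderiv ℝ f y) y) ∧
    (∀ i : Fin 4, HasDerivAt (fun t : ℝ => fderiv ℝ f (z + t • sgl i) (sgl i))
        (fderiv ℝ (fderiv ℝ f) z (sgl i) (sgl i)) 0) ∧
    (∑ i : Fin 4, iteratedFDerivWithin ℝ 2 f Ω z ![sgl i, sgl i])
      = ∑ i : Fin 4, fderiv ℝ (fderiv ℝ f) z (sgl i) (sgl i) := by
  have hCA : ContDiffAt ℝ 2 f z := hf.contDiffAt (hΩ.mem_nhds hz)
  have hev : ∀ᶠ y in nhds z, HasFDerivAt f (fderiv ℝ f y) y := by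
    filter_upwards [hΩ.mem_nhds hz] with y hy
    exact ((hf.contDiffAt (hΩ.mem_nhds hy)).differentiableAt (by norm_num)).hasFDerivAt
  have hf' : HasFDerivAt (fderiv ℝ f) (fderiv ℝ (fderiv ℝ f) z) z := by
    have h1 : ContDiffAt ℝ 1 (fderiv ℝ f) z := hCA.fderiv_right (le_refl _)
    exact (h1.differentiableAt (by norm_num)).hasFDerivAt
  refine ⟨hev, fun i => ?_, ?_⟩
  · set γ : ℝ → E4 := fun t => z + t • sgl i with hγdef
    have hγd : HasDerivAt γ (sgl i) 0 := by
      simpa [hγdef] using ((hasDerivAt_id (0:ℝ)).smul_const (sgl i)).const_add z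
    have hγ0 : γ 0 = z := by simp [hγdef]
    have hc : HasDerivAt (fun t => fderiv ℝ f (γ t)) (fderiv ℝ (fderiv ℝ f) z (sgl i)) 0 := by
      have hf'' : HasFDerivAt (fderiv ℝ f) (fderiv ℝ (fderiv ℝ f) z) (γ 0) := hγ0 ▸ hf'
      exact hf''.comp_hasDerivAt 0 hγd
    have := (ContinuousLinearMap.apply ℝ ℝ (sgl i)).hasFDerivAt.comp_hasDerivAt 0 hc
    exact this
  · apply Finset.sum_congr rfl
    intro i _
    rw [iteratedFDerivWithin_of_isOpen 2 hΩ hz, iteratedFDeriv_two_apply]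
    simp


lemma barrier_eventually {A A1 : ℝ → ℝ} {β : ℝ}
    (hA : ∀ q ∈ Set.Ioi β, HasDerivAt A (A1 q) q)
    {x0 : E4} (hx0 : β < ‖x0‖^2) :
    ∀ᶠ y in nhds x0, HasFDerivAt (fun y : E4 => A (‖y‖^2))
      (A1 (‖y‖^2) • (2 • innerSL ℝ y)) y := by
  have hopen : ∀ᶠ y in nhds x0, β < ‖y‖^2 := by
    have hc : Continuous (fun y : E4 => ‖y‖^2) := by fun_prop
    exact hc.continuousAt.eventually_mem (Ioi_mem_nhds hx0)
  filter_upwards [hopen] with y hy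
  have h1 : HasFDerivAt (fun y : E4 => ‖y‖^2) (2 • innerSL ℝ y) y :=
    (hasStrictFDerivAt_norm_sq y).hasFDerivAt
  exact (hA _ hy).comp_hasFDerivAt y h1

lemma barrier_dir {A1 A2 : ℝ → ℝ} {β : ℝ}
    (hA1 : ∀ q ∈ Set.Ioi β, HasDerivAt A1 (A2 q) q)
    {x0 : E4} (hx0 : β < ‖x0‖^2) (i : Fin 4) :
    HasDerivAt (fun t : ℝ =>
        (A1 (‖x0 + t • sgl i‖^2) • (2 • innerSL ℝ (x0 + t • sgl i))) (sgl i))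
      (4 * A2 (‖x0‖^2) * (x0 i)^2 + 2 * A1 (‖x0‖^2)) 0 := by
  set γ : ℝ → E4 := fun t => x0 + t • sgl i with hγdef
  have hγd : ∀ t : ℝ, HasDerivAt γ (sgl i) t := fun t => by
    simpa [hγdef] using ((hasDerivAt_id t).smul_const (sgl i)).const_add x0
  have hγ0 : γ 0 = x0 := by simp [hγdef]
  -- inner function
  have hI : HasDerivAt (fun t => (inner ℝ (γ t) (sgl i) : ℝ)) 1 0 := by
    have := (hγd 0).inner ℝ (hasDerivAt_const (0:ℝ) (sgl i))
    simpa [real_inner_self_eq_norm_sq] using this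
  -- norm sq function
  have hN : HasDerivAt (fun t => ‖γ t‖^2) (2 * (inner ℝ x0 (sgl i) : ℝ)) 0 := by
    have := (hγd 0).norm_sq
    simpa [hγ0] using this
  have hAval : HasDerivAt (fun t => A1 (‖γ t‖^2))
      (A2 (‖x0‖^2) * (2 * (inner ℝ x0 (sgl i) : ℝ))) 0 := by
    have h0 : HasDerivAt A1 (A2 (‖x0‖^2)) (‖γ 0‖^2) := by rw [hγ0]; exact hA1 _ hx0
    exact (h0.comp 0 hN : _)
  -- the full function: A1(N t) * (2 * I t)
  have heq : (fun t : ℝ => (A1 (‖γ t‖^2) • (2 • innerSL ℝ (γ t))) (sgl i))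
      = fun t => A1 (‖γ t‖^2) * (2 * (inner ℝ (γ t) (sgl i) : ℝ)) := by
    funext t
    simp [two_smul]
    ring
  rw [heq]
  have := hAval.mul ((hI.const_mul (2:ℝ)))
  refine this.congr_deriv ?_
  have hx0i : (inner ℝ x0 (sgl i) : ℝ) = x0 i := by
    simp [sgl, EuclideanSpace.inner_single_right]
  rw [hγ0, hx0i]
  ring


lemma norm_sq_eq_sum (z : E4) : ‖z‖^2 = ∑ i, (z i)^2 := by
  rw [EuclideanSpace.norm_eq]
  rw [Real.sq_sqrt (by positivity)]
  congr 1; funext i; simp [Real.norm_eq_abs, sq_abs]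

/-- compact shells -/
lemma shell_compact (a R : ℝ) : IsCompact {y : E4 | ‖y‖ ∈ Set.Icc a R} := by
  have hcl : IsClosed {y : E4 | ‖y‖ ∈ Set.Icc a R} := isClosed_Icc.preimage continuous_norm
  apply (isCompact_closedBall (0:E4) (max R 0)).of_isClosed_subset hcl
  intro y hy
  simp only [Metric.mem_closedBall, dist_zero_right]
  exact le_trans hy.2 (le_max_left _ _)

/-- The upper comparison principle. -/
lemma comp_upper {ε a η : ℝ} (hε : 0 < ε) (hεa : ε < a)
    {v : E4 → ℝ}
    (hv_smooth : ContDiffOn ℝ 2 v {y : E4 | ε < ‖y‖})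
    (hv_pde : ∀ y : E4, ε < ‖y‖ → laplacianWithin v {y : E4 | ε < ‖y‖} y = 2 * (v y)^2)
    (hv_inf : Tendsto v (Bornology.cobounded E4) (nhds 0))
    {A A1 A2 : ℝ → ℝ}
    (hA : ∀ q ∈ Set.Ioi (a^2), HasDerivAt A (A1 q) q)
    (hA1 : ∀ q ∈ Set.Ioi (a^2), HasDerivAt A1 (A2 q) q)
    (hsuper : ∀ q ∈ Set.Ioi (a^2), 4*q*(A2 q) + 8*(A1 q) ≤ 2*(A q)^2)
    (hApos : ∀ q ∈ Set.Ioi (a^2), 0 ≤ A q)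
    (hblow : Tendsto A (nhdsWithin (a^2) (Set.Ioi (a^2))) atTop)
    (hη : 0 < η) :
    ∀ y : E4, a < ‖y‖ → v y ≤ A (‖y‖^2) + η := by
  set Ω : Set E4 := {y : E4 | ε < ‖y‖} with hΩdef
  have hΩopen : IsOpen Ω := isOpen_lt continuous_const continuous_norm
  by_contra hcon
  push_neg at hcon
  obtain ⟨y₀, hy₀a, hy₀⟩ := hcon
  set h : E4 → ℝ := fun y => v y - (A (‖y‖^2) + η) with hdef
  have hy₀' : 0 < h y₀ := by simp only [hdef]; linarith
  set m : ℝ := h y₀ with hm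
  have ha0 : 0 < a := lt_trans hε hεa
  -- Step 1 : outer radius
  have hout : ∃ C : ℝ, ∀ y : E4, C ≤ ‖y‖ → v y < η := by
    have hev : ∀ᶠ y in Bornology.cobounded E4, v y < η :=
      hv_inf.eventually (eventually_lt_nhds hη)  -- v y < η eventually
    have hb : Bornology.IsBounded {y : E4 | v y < η}ᶜ :=
      Bornology.isBounded_compl_iff.2 hev
    obtain ⟨C, hC⟩ := isBounded_iff_forall_norm_le.1 hb
    refine ⟨C + 1, fun y hy => ?_⟩
    by_contra hc
    push_neg at hc
    have : ‖y‖ ≤ C := hC y (by simpa using hc)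
    linarith
  obtain ⟨C, hC⟩ := hout
  set R : ℝ := max (max C (a+2)) (‖y₀‖ + 1) with hR
  -- Step 2 : bound of v on the inner shell
  obtain ⟨M, hM⟩ : ∃ M, ∀ y ∈ {y : E4 | ‖y‖ ∈ Set.Icc a (a+1)}, ‖v y‖ ≤ M := by
    apply (shell_compact a (a+1)).exists_bound_of_continuousOn
    exact hv_smooth.continuousOn.mono (fun y hy => lt_of_lt_of_le hεa hy.1)
  -- Step 3 : pick a'
  have hev2 : ∀ᶠ q in nhdsWithin (a^2) (Set.Ioi (a^2)), M + 1 ≤ A q :=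
    hblow.eventually (eventually_ge_atTop (M+1))
  obtain ⟨w, hw, hIoo⟩ := (mem_nhdsGT_iff_exists_Ioo_subset).1 hev2
  set ρ : ℝ := min w (min ((a+1)^2) (‖y₀‖^2)) with hρ
  have hρβ : a^2 < ρ := by
    apply lt_min hw
    apply lt_min <;> nlinarith
  set a' : ℝ := Real.sqrt ((a^2 + ρ)/2) with ha'
  have ha'sq : a'^2 = (a^2 + ρ)/2 := Real.sq_sqrt (by nlinarith)
  have haa' : a < a' := by
    have : a^2 < a'^2 := by rw [ha'sq]; linarith
    nlinarith [Real.sqrt_nonneg ((a^2 + ρ)/2)]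
  have ha'ρ : a'^2 < ρ := by rw [ha'sq]; linarith
  -- a' < a + 1 and a' < ‖y₀‖
  have ha'lt1 : a' < a + 1 := by
    have h1 : a'^2 < (a+1)^2 := lt_of_lt_of_le ha'ρ (le_trans (min_le_right _ _) (min_le_left _ _))
    nlinarith [Real.sqrt_nonneg ((a^2 + ρ)/2)]
  have ha'y₀ : a' < ‖y₀‖ := by
    have h1 : a'^2 < ‖y₀‖^2 := lt_of_lt_of_le ha'ρ (le_trans (min_le_right _ _) (min_le_right _ _))
    nlinarith [Real.sqrt_nonneg ((a^2 + ρ)/2), norm_nonneg y₀]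
  -- Step 4 : h < 0 on inner shell
  have hinner : ∀ y : E4, a < ‖y‖ → ‖y‖ ≤ a' → h y < 0 := by
    intro y hy1 hy2
    have hq : ‖y‖^2 ∈ Set.Ioo (a^2) w := by
      constructor
      · nlinarith
      · have : ‖y‖^2 ≤ a'^2 := by nlinarith [norm_nonneg y]
        have hwρ : ρ ≤ w := min_le_left _ _
        linarith
    have hAy : M + 1 ≤ A (‖y‖^2) := hIoo hq
    have hvy : v y ≤ M := by
      have := hM y ⟨le_of_lt hy1, le_trans hy2 (le_of_lt ha'lt1)⟩
      exact le_trans (le_abs_self _) this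
    simp only [hdef]
    linarith
  -- Step 5 : max on the compact shell
  set K : Set E4 := {y : E4 | ‖y‖ ∈ Set.Icc a' R} with hK
  have hKc : IsCompact K := shell_compact a' R
  have hKne : y₀ ∈ K := by
    constructor
    · exact le_of_lt ha'y₀
    · simp only [hR]
      exact le_trans (by linarith) (le_max_right _ _)
  have hsub : K ⊆ Ω := fun y hy => by
    simp only [hΩdef, Set.mem_setOf_eq]
    have := hy.1; linarith
  have hconth : ContinuousOn h K := by
    apply ContinuousOn.sub
    · exact hv_smooth.continuousOn.mono hsub
    · apply ContinuousOn.add _ continuousOn_const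
      intro y hy
      have hq : a^2 < ‖y‖^2 := by have := hy.1; nlinarith [norm_nonneg y]
      have hd : ContinuousAt A (‖y‖^2) := (hA _ hq).continuousAt
      exact (ContinuousAt.comp (x := y) hd ((continuous_norm.pow 2).continuousAt)).continuousWithinAt
  obtain ⟨z, hzK, hzmax⟩ := hKc.exists_isMaxOn ⟨y₀, hKne⟩ hconth
  have hzm : m ≤ h z := hzmax hKne
  have hzpos : 0 < h z := lt_of_lt_of_le hy₀' hzm
  -- z is in the open shell
  have hza' : a' < ‖z‖ := by
    rcases lt_or_eq_of_le hzK.1 with h1 | h1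
    · exact h1
    · exfalso
      have := hinner z (by rw [← h1]; exact haa') (le_of_eq h1.symm)
      linarith
  have hzR : ‖z‖ < R := by
    by_contra hc
    push_neg at hc
    have hCz : C ≤ ‖z‖ := le_trans (le_trans (le_max_left _ _) (le_max_left _ _)) hc
    have hvz : v z < η := hC z hCz
    have hAz : 0 ≤ A (‖z‖^2) := by
      apply hApos
      have := lt_trans haa' hza'
      simp only [Set.mem_Ioi]; nlinarith
    simp only [hdef] at hzpos
    linarith
  have hzΩ : z ∈ Ω := hsub hzK
  have hzq : a^2 < ‖z‖^2 := by have := lt_trans haa' hza'; nlinarith [norm_nonneg z]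
  -- local max
  have hlocmax : IsLocalMax h z := by
    apply hzmax.isLocalMax
    have hopen : IsOpen {y : E4 | a' < ‖y‖ ∧ ‖y‖ < R} :=
      (isOpen_lt continuous_const continuous_norm).inter (isOpen_lt continuous_norm continuous_const)
    apply Filter.mem_of_superset (hopen.mem_nhds ⟨hza', hzR⟩)
    exact fun y hy => ⟨le_of_lt hy.1, le_of_lt hy.2⟩
  -- derivative data
  obtain ⟨hev_v, hdir_v, hlap_v⟩ := u_data hΩopen hv_smooth hzΩ
  have hev_W := barrier_eventually hA hzq
  set f1 : E4 → (E4 →L[ℝ] ℝ) := fun y => fderiv ℝ v y - (A1 (‖y‖^2) • (2 • innerSL ℝ y)) with hf1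
  have hfh : ∀ᶠ y in nhds z, HasFDerivAt h (f1 y) y := by
    filter_upwards [hev_v, hev_W] with y h1 h2
    exact h1.sub (h2.add_const η)
  have hdir : ∀ i : Fin 4, HasDerivAt (fun t : ℝ => f1 (z + t • sgl i) (sgl i))
      ((fderiv ℝ (fderiv ℝ v) z (sgl i) (sgl i)) - (4 * A2 (‖z‖^2) * (z i)^2 + 2 * A1 (‖z‖^2))) 0 := by
    intro i
    have heq : (fun t : ℝ => f1 (z + t • sgl i) (sgl i))
        = fun t : ℝ => fderiv ℝ v (z + t • sgl i) (sgl i)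
          - (A1 (‖z + t • sgl i‖^2) • (2 • innerSL ℝ (z + t • sgl i))) (sgl i) := by
      funext t; simp [hf1, ContinuousLinearMap.sub_apply]
    rw [heq]
    exact (hdir_v i).sub (barrier_dir hA1 hzq i)
  have hsumle := sum_dir_nonpos hfh hdir hlocmax
  rw [Finset.sum_sub_distrib] at hsumle
  have hlapz : ∑ i : Fin 4, fderiv ℝ (fderiv ℝ v) z (sgl i) (sgl i) = 2 * (v z)^2 := by
    rw [← hlap_v]
    exact hv_pde z hzΩ
  have hsum2 : ∑ i : Fin 4, (4 * A2 (‖z‖^2) * (z i)^2 + 2 * A1 (‖z‖^2))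
      = 4 * ‖z‖^2 * A2 (‖z‖^2) + 8 * A1 (‖z‖^2) := by
    rw [Finset.sum_add_distrib]
    rw [← Finset.mul_sum]
    rw [← norm_sq_eq_sum]
    simp [Finset.sum_const]
    ring
  rw [hlapz, hsum2] at hsumle
  -- contradiction
  have hAz : 0 ≤ A (‖z‖^2) := hApos _ hzq
  have hvz : A (‖z‖^2) + η < v z := by
    simp only [hdef] at hzpos; linarith
  have hfin := hsuper _ hzq
  nlinarith

/-- The lower comparison principle. -/
lemma comp_lower {ε β : ℝ} (hε : 0 < ε) (hβ0 : 0 ≤ β) (hβε : β < ε^2)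
    {v : E4 → ℝ}
    (hv_nonneg : ∀ y : E4, ε < ‖y‖ → 0 ≤ v y)
    (hv_smooth : ContDiffOn ℝ 2 v {y : E4 | ε < ‖y‖})
    (hv_pde : ∀ y : E4, ε < ‖y‖ → laplacianWithin v {y : E4 | ε < ‖y‖} y = 2 * (v y)^2)
    (hv_bnd : Tendsto v (Filter.comap norm (nhdsWithin ε (Set.Ioi ε))) atTop)
    {A A1 A2 : ℝ → ℝ}
    (hA : ∀ q ∈ Set.Ioi β, HasDerivAt A (A1 q) q)
    (hA1 : ∀ q ∈ Set.Ioi β, HasDerivAt A1 (A2 q) q)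
    (hsub : ∀ q ∈ Set.Ioi β, 2*(A q)^2 ≤ 4*q*(A2 q) + 8*(A1 q))
    (hApos : ∀ q ∈ Set.Ioi β, 0 ≤ A q)
    (hdec : ∀ p q : ℝ, β < p → p ≤ q → A q ≤ A p)
    (hA0 : Tendsto A atTop (nhds 0)) :
    ∀ y : E4, ε < ‖y‖ → A (‖y‖^2) ≤ v y := by
  set Ω : Set E4 := {y : E4 | ε < ‖y‖} with hΩdef
  have hΩopen : IsOpen Ω := isOpen_lt continuous_const continuous_norm
  by_contra hcon
  push_neg at hcon
  obtain ⟨y₀, hy₀ε, hy₀⟩ := hcon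
  set h : E4 → ℝ := fun y => A (‖y‖^2) - v y with hdef
  have hy₀' : 0 < h y₀ := by simp only [hdef]; linarith
  set m : ℝ := h y₀ with hm
  set M' : ℝ := A (ε^2) with hM'
  -- inner shell
  have hev : ∀ᶠ r in nhdsWithin ε (Set.Ioi ε), ∀ y : E4, ‖y‖ = r → M' < v y := by
    have := hv_bnd.eventually (eventually_gt_atTop M')
    rwa [Filter.eventually_comap] at this
  obtain ⟨w, hw, hIoo⟩ := (mem_nhdsGT_iff_exists_Ioo_subset).1 hev
  have hw' : ε < w := hw
  set a' : ℝ := min ((ε + w)/2) ((ε + ‖y₀‖)/2) with ha'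
  have hεa' : ε < a' := by
    apply lt_min <;> linarith
  have ha'w : a' < w := lt_of_le_of_lt (min_le_left _ _) (by linarith)
  have ha'y₀ : a' < ‖y₀‖ := lt_of_le_of_lt (min_le_right _ _) (by linarith)
  have hinner : ∀ y : E4, ε < ‖y‖ → ‖y‖ ≤ a' → h y < 0 := by
    intro y hy1 hy2
    have hvy : M' < v y := hIoo (⟨hy1, lt_of_le_of_lt hy2 ha'w⟩ : ‖y‖ ∈ Set.Ioo ε w) y rfl
    have hAy : A (‖y‖^2) ≤ M' := hdec (ε^2) (‖y‖^2) hβε (by nlinarith)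
    simp only [hdef]; linarith
  -- outer radius
  obtain ⟨Q, hQ⟩ := (hA0.eventually (eventually_lt_nhds (by positivity : (0:ℝ) < m/2))).exists_forall_of_atTop
  set R : ℝ := max (Real.sqrt (max Q 0) + 1) (‖y₀‖ + 1) with hR
  have hRy₀ : ‖y₀‖ ≤ R := le_trans (by linarith) (le_max_right _ _)
  have houter : ∀ y : E4, R ≤ ‖y‖ → h y < m/2 := by
    intro y hy
    have h1 : Real.sqrt (max Q 0) + 1 ≤ ‖y‖ := le_trans (le_max_left _ _) hy
    have h2 : Q ≤ ‖y‖^2 := by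
      have hs : Real.sqrt (max Q 0) ^ 2 = max Q 0 := Real.sq_sqrt (le_max_right _ _)
      nlinarith [Real.sqrt_nonneg (max Q 0), le_max_left Q 0]
    have hAy : A (‖y‖^2) < m/2 := hQ _ h2
    have hvy : 0 ≤ v y := by
      apply hv_nonneg
      have : ε < ‖y₀‖ := hy₀ε
      calc ε < ‖y₀‖ + 1 := by linarith
        _ ≤ R := le_max_right _ _
        _ ≤ ‖y‖ := hy
    simp only [hdef]; linarith
  -- compact shell
  set K : Set E4 := {y : E4 | ‖y‖ ∈ Set.Icc a' R} with hK
  have hKc : IsCompact K := shell_compact a' R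
  have hKne : y₀ ∈ K := ⟨le_of_lt ha'y₀, hRy₀⟩
  have hsub' : K ⊆ Ω := fun y hy => by
    simp only [hΩdef, Set.mem_setOf_eq]
    have := hy.1; linarith
  have hconth : ContinuousOn h K := by
    apply ContinuousOn.sub
    · intro y hy
      have hq : β < ‖y‖^2 := by
        have h1 := hy.1
        have : ε ≤ ‖y‖ := by linarith
        nlinarith
      have hd : ContinuousAt A (‖y‖^2) := (hA _ hq).continuousAt
      exact (ContinuousAt.comp (x := y) hd ((continuous_norm.pow 2).continuousAt)).continuousWithinAt
    · exact hv_smooth.continuousOn.mono hsub'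
  obtain ⟨z, hzK, hzmax⟩ := hKc.exists_isMaxOn ⟨y₀, hKne⟩ hconth
  have hzm : m ≤ h z := hzmax hKne
  have hzpos : 0 < h z := lt_of_lt_of_le hy₀' hzm
  have hza' : a' < ‖z‖ := by
    rcases lt_or_eq_of_le hzK.1 with h1 | h1
    · exact h1
    · exfalso
      have := hinner z (by rw [← h1]; exact hεa') (le_of_eq h1.symm)
      linarith
  have hzR : ‖z‖ < R := by
    by_contra hc
    push_neg at hc
    have h2 := houter z hc
    have h3 := lt_of_le_of_lt hzm h2
    linarith
  have hzΩ : z ∈ Ω := hsub' hzK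
  have hzq : β < ‖z‖^2 := by
    have h1 : ε < ‖z‖ := lt_trans hεa' hza'
    nlinarith
  have hlocmax : IsLocalMax h z := by
    apply hzmax.isLocalMax
    have hopen : IsOpen {y : E4 | a' < ‖y‖ ∧ ‖y‖ < R} :=
      (isOpen_lt continuous_const continuous_norm).inter (isOpen_lt continuous_norm continuous_const)
    apply Filter.mem_of_superset (hopen.mem_nhds ⟨hza', hzR⟩)
    exact fun y hy => ⟨le_of_lt hy.1, le_of_lt hy.2⟩
  obtain ⟨hev_v, hdir_v, hlap_v⟩ := u_data hΩopen hv_smooth hzΩ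
  have hev_W := barrier_eventually hA hzq
  set f1 : E4 → (E4 →L[ℝ] ℝ) := fun y => (A1 (‖y‖^2) • (2 • innerSL ℝ y)) - fderiv ℝ v y with hf1
  have hfh : ∀ᶠ y in nhds z, HasFDerivAt h (f1 y) y := by
    filter_upwards [hev_v, hev_W] with y h1 h2
    exact h2.sub h1
  have hdir : ∀ i : Fin 4, HasDerivAt (fun t : ℝ => f1 (z + t • sgl i) (sgl i))
      ((4 * A2 (‖z‖^2) * (z i)^2 + 2 * A1 (‖z‖^2)) - (fderiv ℝ (fderiv ℝ v) z (sgl i) (sgl i))) 0 := by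
    intro i
    have heq : (fun t : ℝ => f1 (z + t • sgl i) (sgl i))
        = fun t : ℝ => (A1 (‖z + t • sgl i‖^2) • (2 • innerSL ℝ (z + t • sgl i))) (sgl i)
          - fderiv ℝ v (z + t • sgl i) (sgl i) := by
      funext t; simp [hf1, ContinuousLinearMap.sub_apply]
    rw [heq]
    exact (barrier_dir hA1 hzq i).sub (hdir_v i)
  have hsumle := sum_dir_nonpos hfh hdir hlocmax
  rw [Finset.sum_sub_distrib] at hsumle
  have hlapz : ∑ i : Fin 4, fderiv ℝ (fderiv ℝ v) z (sgl i) (sgl i) = 2 * (v z)^2 := by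
    rw [← hlap_v]
    exact hv_pde z hzΩ
  have hsum2 : ∑ i : Fin 4, (4 * A2 (‖z‖^2) * (z i)^2 + 2 * A1 (‖z‖^2))
      = 4 * ‖z‖^2 * A2 (‖z‖^2) + 8 * A1 (‖z‖^2) := by
    rw [Finset.sum_add_distrib]
    rw [← Finset.mul_sum]
    rw [← norm_sq_eq_sum]
    simp [Finset.sum_const]
    ring
  rw [hlapz, hsum2] at hsumle
  have hAz : 0 ≤ A (‖z‖^2) := hApos _ hzq
  have hvz : 0 ≤ v z := hv_nonneg z hzΩ
  have hgt : v z < A (‖z‖^2) := by simp only [hdef] at hzpos; linarith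
  have hfin := hsub _ hzq
  nlinarith


/-- derivative of the upper barrier -/
lemma up_deriv1 (P C β : ℝ) (hβ : 0 < β) :
    ∀ q ∈ Set.Ioi β, HasDerivAt
      (fun q => (P + C*(Real.log q - Real.log β))/((Real.log q - Real.log β)^2*q))
      (-((C*(Real.log q - Real.log β)^2 + (C+P)*(Real.log q - Real.log β) + 2*P)
        /((Real.log q - Real.log β)^3*q^2))) q := by
  intro q hq
  have hq0 : 0 < q := lt_trans hβ hq
  have hs0 : 0 < Real.log q - Real.log β := sub_pos.2 (Real.log_lt_log hβ hq)
  have hs : HasDerivAt (fun q => Real.log q - Real.log β) (1/q) q := by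
    simpa using (Real.hasDerivAt_log (ne_of_gt hq0)).sub_const (Real.log β)
  have hnum : HasDerivAt (fun q => P + C*(Real.log q - Real.log β)) (C * (1/q)) q :=
    (hs.const_mul C).const_add P
  have hden : HasDerivAt (fun q => (Real.log q - Real.log β)^2*q)
      ((2*(Real.log q - Real.log β)^1*(1/q))*q + (Real.log q - Real.log β)^2*1) q :=
    (hs.pow 2).mul (hasDerivAt_id q)
  have hdne : (Real.log q - Real.log β)^2*q ≠ 0 := by positivity
  have := hnum.div hden hdne
  refine this.congr_deriv ?_
  field_simp
  ring

lemma up_deriv2 (P C β : ℝ) (hβ : 0 < β) :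
    ∀ q ∈ Set.Ioi β, HasDerivAt
      (fun q => -((C*(Real.log q - Real.log β)^2 + (C+P)*(Real.log q - Real.log β) + 2*P)
        /((Real.log q - Real.log β)^3*q^2)))
      ((2*C*(Real.log q - Real.log β)^3 + (3*C+2*P)*(Real.log q - Real.log β)^2
        + (2*C+6*P)*(Real.log q - Real.log β) + 6*P)/((Real.log q - Real.log β)^4*q^3)) q := by
  intro q hq
  have hq0 : 0 < q := lt_trans hβ hq
  have hs0 : 0 < Real.log q - Real.log β := sub_pos.2 (Real.log_lt_log hβ hq)
  have hs : HasDerivAt (fun q => Real.log q - Real.log β) (1/q) q := by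
    simpa using (Real.hasDerivAt_log (ne_of_gt hq0)).sub_const (Real.log β)
  have hnum : HasDerivAt
      (fun q => C*(Real.log q - Real.log β)^2 + (C+P)*(Real.log q - Real.log β) + 2*P)
      ((C*(2*(Real.log q - Real.log β)^1*(1/q)) + (C+P)*(1/q))) q := by
    exact (((hs.pow 2).const_mul C).add (hs.const_mul (C+P))).add_const (2*P)
  have hden : HasDerivAt (fun q => (Real.log q - Real.log β)^3*q^2)
      ((3*(Real.log q - Real.log β)^2*(1/q))*q^2 + (Real.log q - Real.log β)^3*(2*q^1)) q := by
    exact (hs.pow 3).mul (hasDerivAt_pow 2 q)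
  have hdne : (Real.log q - Real.log β)^3*q^2 ≠ 0 := by positivity
  have := (hnum.div hden hdne).neg
  refine this.congr_deriv ?_
  field_simp
  ring

lemma low_deriv1 (C β : ℝ) (hβ : 0 < β) :
    ∀ q ∈ Set.Ioi β, HasDerivAt
      (fun q => C/(q*(Real.log q - Real.log β)))
      (-((C*(Real.log q - Real.log β) + C)/((Real.log q - Real.log β)^2*q^2))) q := by
  intro q hq
  have hq0 : 0 < q := lt_trans hβ hq
  have hs0 : 0 < Real.log q - Real.log β := sub_pos.2 (Real.log_lt_log hβ hq)
  have hs : HasDerivAt (fun q => Real.log q - Real.log β) (1/q) q := by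
    simpa using (Real.hasDerivAt_log (ne_of_gt hq0)).sub_const (Real.log β)
  have hden : HasDerivAt (fun q => q*(Real.log q - Real.log β))
      (1*(Real.log q - Real.log β) + q*(1/q)) q := (hasDerivAt_id q).mul hs
  have hdne : q*(Real.log q - Real.log β) ≠ 0 := by positivity
  have := (hasDerivAt_const q C).div hden hdne
  refine this.congr_deriv ?_
  field_simp
  ring

lemma low_deriv2 (C β : ℝ) (hβ : 0 < β) :
    ∀ q ∈ Set.Ioi β, HasDerivAt
      (fun q => -((C*(Real.log q - Real.log β) + C)/((Real.log q - Real.log β)^2*q^2)))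
      ((2*C*(Real.log q - Real.log β)^2 + 3*C*(Real.log q - Real.log β) + 2*C)
        /((Real.log q - Real.log β)^3*q^3)) q := by
  intro q hq
  have hq0 : 0 < q := lt_trans hβ hq
  have hs0 : 0 < Real.log q - Real.log β := sub_pos.2 (Real.log_lt_log hβ hq)
  have hs : HasDerivAt (fun q => Real.log q - Real.log β) (1/q) q := by
    simpa using (Real.hasDerivAt_log (ne_of_gt hq0)).sub_const (Real.log β)
  have hnum : HasDerivAt (fun q => C*(Real.log q - Real.log β) + C) (C*(1/q)) q :=
    (hs.const_mul C).add_const C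
  have hden : HasDerivAt (fun q => (Real.log q - Real.log β)^2*q^2)
      ((2*(Real.log q - Real.log β)^1*(1/q))*q^2 + (Real.log q - Real.log β)^2*(2*q^1)) q :=
    (hs.pow 2).mul (hasDerivAt_pow 2 q)
  have hdne : (Real.log q - Real.log β)^2*q^2 ≠ 0 := by positivity
  have := (hnum.div hden hdne).neg
  refine this.congr_deriv ?_
  field_simp
  ring


lemma up_super {δ β : ℝ} (hδ : 0 < δ) (hβ : 0 < β) :
    ∀ q ∈ Set.Ioi β,
      4*q*((2*(2+2*δ)*(Real.log q - Real.log β)^3 + (3*(2+2*δ)+2*(12+4/δ))*(Real.log q - Real.log β)^2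
        + (2*(2+2*δ)+6*(12+4/δ))*(Real.log q - Real.log β) + 6*(12+4/δ))/((Real.log q - Real.log β)^4*q^3))
      + 8*(-(((2+2*δ)*(Real.log q - Real.log β)^2 + ((2+2*δ)+(12+4/δ))*(Real.log q - Real.log β) + 2*(12+4/δ))
        /((Real.log q - Real.log β)^3*q^2)))
      ≤ 2*(((12+4/δ) + (2+2*δ)*(Real.log q - Real.log β))/((Real.log q - Real.log β)^2*q))^2 := by
  intro q hq
  have hq0 : 0 < q := lt_trans hβ hq
  have hs0 : 0 < Real.log q - Real.log β := sub_pos.2 (Real.log_lt_log hβ hq)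
  set s : ℝ := Real.log q - Real.log β with hsdef
  set C : ℝ := 2+2*δ with hC
  set P : ℝ := 12+4/δ with hP
  have hC2 : 2 < C := by simp only [hC]; linarith
  have hP12 : 12 < P := by
    have : 0 < 4/δ := by positivity
    simp only [hP]; linarith
  have e1 : 4*q*((2*C*s^3 + (3*C+2*P)*s^2 + (2*C+6*P)*s + 6*P)/(s^4*q^3))
      + 8*(-((C*s^2 + (C+P)*s + 2*P)/(s^3*q^2)))
      = (4*C*s^2 + (8*C+8*P)*s + 24*P)/(s^4*q^2) := by
    field_simp
    ring
  have e2 : 2*((P + C*s)/(s^2*q))^2 = (2*C^2*s^2 + 4*P*C*s + 2*P^2)/(s^4*q^2) := by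
    field_simp
    ring
  rw [e1, e2]
  rw [div_le_div_iff_of_pos_right (by positivity : (0:ℝ) < s^4*q^2)]
  have key1 : 4*C ≤ 2*C^2 := by nlinarith
  have key2 : 8*C+8*P ≤ 4*P*C := by
    have h2 : 4*P*C - 8*C - 8*P = 16 + 80*δ := by
      simp only [hC, hP]
      field_simp
      ring
    linarith
  have key3 : 24*P ≤ 2*P^2 := by nlinarith
  nlinarith [sq_nonneg s, mul_pos hs0 hs0]

lemma low_sub {C β : ℝ} (hC0 : 0 < C) (hC2 : C ≤ 2) (hβ : 0 < β) :
    ∀ q ∈ Set.Ioi β,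
      2*(C/(q*(Real.log q - Real.log β)))^2
      ≤ 4*q*((2*C*(Real.log q - Real.log β)^2 + 3*C*(Real.log q - Real.log β) + 2*C)
          /((Real.log q - Real.log β)^3*q^3))
        + 8*(-((C*(Real.log q - Real.log β) + C)/((Real.log q - Real.log β)^2*q^2))) := by
  intro q hq
  have hq0 : 0 < q := lt_trans hβ hq
  have hs0 : 0 < Real.log q - Real.log β := sub_pos.2 (Real.log_lt_log hβ hq)
  set s : ℝ := Real.log q - Real.log β with hsdef
  have e1 : 4*q*((2*C*s^2 + 3*C*s + 2*C)/(s^3*q^3)) + 8*(-((C*s + C)/(s^2*q^2)))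
      = (4*C*s + 8*C)/(s^3*q^2) := by
    field_simp
    ring
  have e2 : 2*(C/(q*s))^2 = (2*C^2*s)/(s^3*q^2) := by
    field_simp
  rw [e1, e2]
  rw [div_le_div_iff_of_pos_right (by positivity : (0:ℝ) < s^3*q^2)]
  nlinarith [mul_nonneg (mul_nonneg hC0.le hs0.le) (sub_nonneg.2 hC2)]


lemma H1 (κ : ℝ) : Tendsto (fun t : ℝ => t/(t+κ)) atTop (nhds 1) := by
  have h0 : Tendsto (fun t : ℝ => t + κ) atTop atTop :=
    tendsto_atTop_add_const_right _ κ tendsto_id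
  have h1 : Tendsto (fun t : ℝ => κ/(t+κ)) atTop (nhds 0) :=
    Tendsto.div_atTop tendsto_const_nhds h0
  have h2 : Tendsto (fun t : ℝ => 1 - κ/(t+κ)) atTop (nhds 1) := by
    simpa using tendsto_const_nhds.sub h1
  apply h2.congr'
  filter_upwards [eventually_gt_atTop (|κ|+1)] with t ht
  have hne : t + κ ≠ 0 := by
    cases abs_le.1 (le_of_lt (lt_of_le_of_lt (le_refl |κ|) (by linarith : |κ| < |κ|+1))) with
    | intro h1 h2 => intro hc; nlinarith [neg_abs_le κ, le_abs_self κ]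
  field_simp
  ring

lemma H2 (κ : ℝ) : Tendsto (fun t : ℝ => t/(t+κ)^2) atTop (nhds 0) := by
  have h0 : Tendsto (fun t : ℝ => t + κ) atTop atTop :=
    tendsto_atTop_add_const_right _ κ tendsto_id
  have h1 : Tendsto (fun t : ℝ => 1/(t+κ)) atTop (nhds 0) :=
    Tendsto.div_atTop tendsto_const_nhds h0
  have := (H1 κ).mul h1
  simp only [mul_zero, one_mul] at this
  apply this.congr'
  filter_upwards [eventually_gt_atTop (|κ|+1)] with t ht
  have hne : t + κ ≠ 0 := by intro hc; nlinarith [neg_abs_le κ, le_abs_self κ]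
  rw [div_mul_div_comm, mul_one, ← pow_two]

lemma Ttend : Tendsto (fun ε : ℝ => -Real.log ε) (nhdsWithin 0 (Set.Ioi 0)) atTop :=
  tendsto_neg_atBot_atTop.comp Real.tendsto_log_nhdsGT_zero

/-- blow-up of the upper barrier at the inner edge -/
lemma up_blow {P C β : ℝ} (hP : 0 < P) (hC : 0 ≤ C) (hβ : 0 < β) :
    Tendsto (fun q => (P + C*(Real.log q - Real.log β))/((Real.log q - Real.log β)^2*q))
      (nhdsWithin β (Set.Ioi β)) atTop := by
  set s : ℝ → ℝ := fun q => Real.log q - Real.log β with hs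
  have h1 : Tendsto s (nhdsWithin β (Set.Ioi β)) (nhdsWithin 0 (Set.Ioi 0)) := by
    rw [tendsto_nhdsWithin_iff]
    constructor
    · have hc : ContinuousAt (fun q => Real.log q - Real.log β) β :=
        (Real.continuousAt_log (ne_of_gt hβ)).sub continuousAt_const
      have := hc.tendsto.mono_left (nhdsWithin_le_nhds (s := Set.Ioi β))
      simpa [hs] using this
    · filter_upwards [self_mem_nhdsWithin] with q hq
      exact Set.mem_Ioi.2 (sub_pos.2 (Real.log_lt_log hβ hq))
  have h2 : Tendsto (fun r : ℝ => P * (r^2)⁻¹) (nhdsWithin 0 (Set.Ioi 0)) atTop := by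
    apply Tendsto.const_mul_atTop hP
    apply Filter.Tendsto.inv_tendsto_nhdsGT_zero
    rw [tendsto_nhdsWithin_iff]
    constructor
    · have : Tendsto (fun r : ℝ => r^2) (nhds 0) (nhds 0) := by
        simpa using (continuous_pow 2).tendsto (0:ℝ)
      exact this.mono_left nhdsWithin_le_nhds
    · filter_upwards [self_mem_nhdsWithin] with r hr
      have hr0 : (0:ℝ) < r := hr
      exact Set.mem_Ioi.2 (by positivity)
  have h3 : Tendsto (fun q => P * ((s q)^2)⁻¹) (nhdsWithin β (Set.Ioi β)) atTop := h2.comp h1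
  have h4 : Tendsto (fun q : ℝ => 1/q) (nhdsWithin β (Set.Ioi β)) (nhds (1/β)) := by
    have : ContinuousAt (fun q : ℝ => 1/q) β := continuousAt_const.div continuousAt_id (ne_of_gt hβ)
    exact this.tendsto.mono_left nhdsWithin_le_nhds
  have h5 : Tendsto (fun q => (P * ((s q)^2)⁻¹) * (1/q)) (nhdsWithin β (Set.Ioi β)) atTop :=
    h3.atTop_mul_pos (by positivity) h4
  apply tendsto_atTop_mono' _ _ h5
  filter_upwards [self_mem_nhdsWithin] with q hq
  have hq0 : 0 < q := lt_trans hβ hq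
  have hs0 : 0 < s q := sub_pos.2 (Real.log_lt_log hβ hq)
  have heq : P * ((s q)^2)⁻¹ * (1/q) = P/((s q)^2*q) := by
    field_simp
  rw [heq]
  gcongr
  have hs0' : 0 < Real.log q - Real.log β := hs0
  nlinarith [mul_nonneg hC hs0'.le]

/-- the lower barrier is decreasing -/
lemma low_dec {C β : ℝ} (hC : 0 ≤ C) (hβ : 0 < β) :
    ∀ p q : ℝ, β < p → p ≤ q →
      C/(q*(Real.log q - Real.log β)) ≤ C/(p*(Real.log p - Real.log β)) := by
  intro p q hp hpq
  have hp0 : 0 < p := lt_trans hβ hp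
  have hsp : 0 < Real.log p - Real.log β := sub_pos.2 (Real.log_lt_log hβ hp)
  have hsq : Real.log p - Real.log β ≤ Real.log q - Real.log β := by
    have := Real.log_le_log hp0 hpq
    linarith
  apply div_le_div_of_nonneg_left hC (by positivity)
  calc p * (Real.log p - Real.log β) ≤ q * (Real.log q - Real.log β) := by
        apply mul_le_mul hpq hsq (le_of_lt hsp) (by linarith)

lemma low_zero {C β : ℝ} (hβ : 0 < β) :
    Tendsto (fun q => C/(q*(Real.log q - Real.log β))) atTop (nhds 0) := by
  apply Tendsto.div_atTop tendsto_const_nhds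
  apply Filter.Tendsto.atTop_mul_atTop₀ tendsto_id
  exact tendsto_atTop_add_const_right _ (-Real.log β) Real.tendsto_log_atTop


/-- Lemma 1 of the paper, via Iscoe's lemma: if for each `ε ∈ (0,1)` the
nonnegative function `u ε` is `C²` on `{|x| > ε}`, solves `Δu = 2u²` there, blows up at the
inner boundary and vanishes at infinity, then for every fixed `x ≠ 0`,
`u_ε(x) ∼ |x|^{−2} (log(1/ε))^{−1}` as `ε → 0`. -/
theorem hitting_probability_asymptotics
    (u : ℝ → EuclideanSpace ℝ (Fin 4) → ℝ)
    (h_nonneg : ∀ ε ∈ Set.Ioo (0 : ℝ) 1, ∀ x : EuclideanSpace ℝ (Fin 4),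
      ε < ‖x‖ → 0 ≤ u ε x)
    (h_smooth : ∀ ε ∈ Set.Ioo (0 : ℝ) 1,
      ContDiffOn ℝ 2 (u ε) {x : EuclideanSpace ℝ (Fin 4) | ε < ‖x‖})
    (h_pde : ∀ ε ∈ Set.Ioo (0 : ℝ) 1, ∀ x : EuclideanSpace ℝ (Fin 4), ε < ‖x‖ →
      laplacianWithin (u ε) {x : EuclideanSpace ℝ (Fin 4) | ε < ‖x‖} x = 2 * (u ε x) ^ 2)
    (h_boundary : ∀ ε ∈ Set.Ioo (0 : ℝ) 1,
      Tendsto (u ε) (Filter.comap norm (nhdsWithin ε (Set.Ioi ε))) atTop)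
    (h_infinity : ∀ ε ∈ Set.Ioo (0 : ℝ) 1,
      Tendsto (u ε) (Bornology.cobounded (EuclideanSpace ℝ (Fin 4))) (nhds 0)) :
    ∀ x : EuclideanSpace ℝ (Fin 4), x ≠ 0 →
      Tendsto (fun ε : ℝ => Real.log (1 / ε) * u ε x)
        (nhdsWithin 0 (Set.Ioi 0)) (nhds (‖x‖ ^ (-2 : ℝ))) := by
  intro x hx
  have hx0 : 0 < ‖x‖ := norm_pos_iff.2 hx
  have hq0 : 0 < ‖x‖^2 := by positivity
  have hrw : ‖x‖ ^ (-2:ℝ) = (‖x‖^2)⁻¹ := by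
    rw [show (-2:ℝ) = -((2:ℕ):ℝ) by norm_num, Real.rpow_neg hx0.le, Real.rpow_natCast]
  rw [hrw, tendsto_order]
  constructor
  · -- lower bound branch
    intro s' hs'
    set C : ℝ := max (s' * ‖x‖^2 + 1) 1 with hCdef
    have hC0 : (0:ℝ) < C := lt_of_lt_of_le one_pos (le_max_right _ _)
    have hC2 : C ≤ 2 := by
      apply max_le _ (by norm_num)
      have h1 : s' * ‖x‖^2 < (‖x‖^2)⁻¹ * ‖x‖^2 := mul_lt_mul_of_pos_right hs' hq0
      rw [inv_mul_cancel₀ (ne_of_gt hq0)] at h1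
      linarith
    have hlim : s' < C/(2*‖x‖^2) := by
      rcases le_or_gt (s' * ‖x‖^2 + 1) 1 with hcase | hcase
      · have hC1 : C = 1 := by rw [hCdef, max_eq_right hcase]
        rw [hC1]
        have hs'0 : s' ≤ 0 := by nlinarith
        have hpos : (0:ℝ) < 1/(2*‖x‖^2) := by positivity
        calc s' ≤ 0 := hs'0
          _ < 1/(2*‖x‖^2) := hpos
      · have hC1 : C = s' * ‖x‖^2 + 1 := by rw [hCdef, max_eq_left hcase.le]
        have hs1 : s' * ‖x‖^2 < 1 := by
          have h2 := mul_lt_mul_of_pos_right hs' hq0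
          rwa [inv_mul_cancel₀ (ne_of_gt hq0)] at h2
        rw [hC1, lt_div_iff₀ (by positivity : (0:ℝ) < 2*‖x‖^2)]
        nlinarith
    set κ : ℝ := Real.log ‖x‖ + Real.log 2 with hκ
    have hg : Tendsto (fun ε : ℝ => (C/(2*‖x‖^2)) * ((-Real.log ε)/((-Real.log ε) + κ)))
        (nhdsWithin 0 (Set.Ioi 0)) (nhds (C/(2*‖x‖^2))) := by
      have := ((H1 κ).comp Ttend).const_mul (C/(2*‖x‖^2))
      simpa using this
    have hev_g := hg.eventually (eventually_gt_nhds hlim)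
    have hev_cond : Set.Ioo (0:ℝ) (min 1 ‖x‖) ∈ nhdsWithin (0:ℝ) (Set.Ioi 0) :=
      Ioo_mem_nhdsGT_of_mem ⟨le_refl 0, by positivity⟩
    filter_upwards [hev_g, hev_cond] with ε hg' hεm
    obtain ⟨hε0, hεlt⟩ := hεm
    have hε1 : ε < 1 := lt_of_lt_of_le hεlt (min_le_left _ _)
    have hεx : ε < ‖x‖ := lt_of_lt_of_le hεlt (min_le_right _ _)
    set β : ℝ := (ε/2)^2 with hβdef
    have hβpos : 0 < β := by positivity
    have hβε : β < ε^2 := by simp only [hβdef]; nlinarith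
    have hlow := comp_lower (hε := hε0) (hβ0 := hβpos.le) (hβε := hβε)
        (hv_nonneg := fun y hy => h_nonneg ε ⟨hε0, hε1⟩ y hy)
        (hv_smooth := h_smooth ε ⟨hε0, hε1⟩)
        (hv_pde := fun y hy => h_pde ε ⟨hε0, hε1⟩ y hy)
        (hv_bnd := h_boundary ε ⟨hε0, hε1⟩)
        (A := fun q => C/(q*(Real.log q - Real.log β)))
        (A1 := fun q => -((C*(Real.log q - Real.log β) + C)/((Real.log q - Real.log β)^2*q^2)))
        (A2 := fun q => (2*C*(Real.log q - Real.log β)^2 + 3*C*(Real.log q - Real.log β) + 2*C)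
          /((Real.log q - Real.log β)^3*q^3))
        (hA := low_deriv1 C β hβpos) (hA1 := low_deriv2 C β hβpos)
        (hsub := low_sub hC0 hC2 hβpos)
        (hApos := fun q hq => by
          have hq0' : 0 < q := lt_trans hβpos hq
          have hs0 : 0 < Real.log q - Real.log β := sub_pos.2 (Real.log_lt_log hβpos hq)
          positivity)
        (hdec := low_dec hC0.le hβpos)
        (hA0 := low_zero hβpos)
        x hεx
    have hsq : Real.log (‖x‖^2) - Real.log β = 2*((-Real.log ε) + κ) := by
      simp only [hβdef, hκ]
      rw [Real.log_pow, Real.log_pow, Real.log_div (ne_of_gt hε0) two_ne_zero]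
      push_cast
      ring
    have hTκ : 0 < (-Real.log ε) + κ := by
      have h2 : β < ‖x‖^2 := by
        have : ε^2 < ‖x‖^2 := by nlinarith
        linarith
      have h3 := sub_pos.2 (Real.log_lt_log hβpos h2)
      rw [hsq] at h3
      linarith
    have hgA : (C/(2*‖x‖^2)) * ((-Real.log ε)/((-Real.log ε) + κ))
        = Real.log (1/ε) * (C/(‖x‖^2*(Real.log (‖x‖^2) - Real.log β))) := by
      rw [one_div, Real.log_inv, hsq]
      field_simp
    have hT0 : 0 ≤ Real.log (1/ε) := by
      rw [one_div, Real.log_inv]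
      linarith [Real.log_nonpos (le_of_lt hε0) (le_of_lt hε1)]
    calc s' < (C/(2*‖x‖^2)) * ((-Real.log ε)/((-Real.log ε) + κ)) := hg'
      _ = Real.log (1/ε) * (C/(‖x‖^2*(Real.log (‖x‖^2) - Real.log β))) := hgA
      _ ≤ Real.log (1/ε) * u ε x := mul_le_mul_of_nonneg_left hlow hT0
  · -- upper bound branch
    intro s' hs'
    have hsq1 : 1 < s' * ‖x‖^2 := by
      have h1 : (‖x‖^2)⁻¹ * ‖x‖^2 < s' * ‖x‖^2 := mul_lt_mul_of_pos_right hs' hq0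
      rwa [inv_mul_cancel₀ (ne_of_gt hq0)] at h1
    set δ : ℝ := (s' * ‖x‖^2 - 1)/2 with hδdef
    have hδ : 0 < δ := by simp only [hδdef]; linarith
    set κm : ℝ := Real.log ‖x‖ - Real.log 2 with hκm
    have hlim : (12+4/δ)/(4*‖x‖^2) * 0 + (2+2*δ)/(2*‖x‖^2) * 1 < s' := by
      rw [mul_zero, zero_add, mul_one, div_lt_iff₀ (by positivity : (0:ℝ) < 2*‖x‖^2)]
      simp only [hδdef]
      nlinarith
    have hG : Tendsto (fun ε : ℝ =>
        (12+4/δ)/(4*‖x‖^2) * ((-Real.log ε)/((-Real.log ε) + κm)^2)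
        + (2+2*δ)/(2*‖x‖^2) * ((-Real.log ε)/((-Real.log ε) + κm)))
        (nhdsWithin 0 (Set.Ioi 0))
        (nhds ((12+4/δ)/(4*‖x‖^2) * 0 + (2+2*δ)/(2*‖x‖^2) * 1)) := by
      exact (((H2 κm).comp Ttend).const_mul _).add (((H1 κm).comp Ttend).const_mul _)
    have hev_g := hG.eventually (eventually_lt_nhds hlim)
    have hev_cond : Set.Ioo (0:ℝ) (min 1 (‖x‖/2)) ∈ nhdsWithin (0:ℝ) (Set.Ioi 0) :=
      Ioo_mem_nhdsGT_of_mem ⟨le_refl 0, by positivity⟩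
    filter_upwards [hev_g, hev_cond] with ε hg' hεm
    obtain ⟨hε0, hεlt⟩ := hεm
    have hε1 : ε < 1 := lt_of_lt_of_le hεlt (min_le_left _ _)
    have hεx2 : ε < ‖x‖/2 := lt_of_lt_of_le hεlt (min_le_right _ _)
    set a : ℝ := ε*(1+ε) with hadef
    have hεa : ε < a := by simp only [hadef]; nlinarith
    have hax : a < ‖x‖ := by simp only [hadef]; nlinarith
    set β : ℝ := a^2 with hβdef
    have hβpos : 0 < β := by
      have : 0 < a := lt_trans hε0 hεa
      positivity
    have hup : ∀ η : ℝ, 0 < η → u ε x ≤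
        ((12+4/δ) + (2+2*δ)*(Real.log (‖x‖^2) - Real.log β))
          /((Real.log (‖x‖^2) - Real.log β)^2*‖x‖^2) + η := by
      intro η hη
      exact comp_upper (hε := hε0) (hεa := by simpa [hβdef] using hεa)
        (hv_smooth := h_smooth ε ⟨hε0, hε1⟩)
        (hv_pde := fun y hy => h_pde ε ⟨hε0, hε1⟩ y hy)
        (hv_inf := h_infinity ε ⟨hε0, hε1⟩)
        (A := fun q => ((12+4/δ) + (2+2*δ)*(Real.log q - Real.log β))
          /((Real.log q - Real.log β)^2*q))
        (A1 := fun q => -(((2+2*δ)*(Real.log q - Real.log β)^2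
          + ((2+2*δ)+(12+4/δ))*(Real.log q - Real.log β) + 2*(12+4/δ))
          /((Real.log q - Real.log β)^3*q^2)))
        (A2 := fun q => (2*(2+2*δ)*(Real.log q - Real.log β)^3
          + (3*(2+2*δ)+2*(12+4/δ))*(Real.log q - Real.log β)^2
          + (2*(2+2*δ)+6*(12+4/δ))*(Real.log q - Real.log β) + 6*(12+4/δ))
          /((Real.log q - Real.log β)^4*q^3))
        (hA := up_deriv1 (12+4/δ) (2+2*δ) β hβpos)
        (hA1 := up_deriv2 (12+4/δ) (2+2*δ) β hβpos)
        (hsuper := up_super hδ hβpos)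
        (hApos := fun q hq => by
          have hq0' : 0 < q := lt_trans hβpos hq
          have hs0 : 0 < Real.log q - Real.log β := sub_pos.2 (Real.log_lt_log hβpos hq)
          have hP0 : (0:ℝ) < 12+4/δ := by positivity
          have hC0 : (0:ℝ) < 2+2*δ := by positivity
          positivity)
        (hblow := up_blow (by positivity) (by positivity) hβpos)
        (hη := hη) x hax
    have hux : u ε x ≤ ((12+4/δ) + (2+2*δ)*(Real.log (‖x‖^2) - Real.log β))
        /((Real.log (‖x‖^2) - Real.log β)^2*‖x‖^2) :=
      le_of_forall_pos_le_add (fun η hη => hup η hη)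
    -- now estimate the barrier value
    have hT0 : 0 ≤ Real.log (1/ε) := by
      rw [one_div, Real.log_inv]
      linarith [Real.log_nonpos (le_of_lt hε0) (le_of_lt hε1)]
    have hTκ : 0 < (-Real.log ε) + κm := by
      simp only [hκm]
      have h1 : Real.log (2*ε) < Real.log ‖x‖ := by
        apply Real.log_lt_log (by positivity)
        linarith
      rw [Real.log_mul two_ne_zero (ne_of_gt hε0)] at h1
      linarith
    have hsβ : 0 < Real.log (‖x‖^2) - Real.log β := by
      apply sub_pos.2
      apply Real.log_lt_log hβpos
      nlinarith
    have hslow : 2*((-Real.log ε) + κm) ≤ Real.log (‖x‖^2) - Real.log β := by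
      simp only [hβdef, hadef, hκm]
      rw [Real.log_pow, Real.log_pow, Real.log_mul (ne_of_gt hε0) (by positivity)]
      have h1 : Real.log (1+ε) ≤ Real.log 2 := by
        apply Real.log_le_log (by positivity)
        linarith
      push_cast
      linarith
    -- f ε ≤ Ĝ ε
    have hchain : Real.log (1/ε) * u ε x ≤
        (12+4/δ)/(4*‖x‖^2) * ((-Real.log ε)/((-Real.log ε) + κm)^2)
        + (2+2*δ)/(2*‖x‖^2) * ((-Real.log ε)/((-Real.log ε) + κm)) := by
      have hT : Real.log (1/ε) = -Real.log ε := by rw [one_div, Real.log_inv]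
      set T : ℝ := -Real.log ε with hTdef
      set S : ℝ := Real.log (‖x‖^2) - Real.log β with hSdef
      have step1 : Real.log (1/ε) * u ε x ≤ T * (((12+4/δ) + (2+2*δ)*S)/(S^2*‖x‖^2)) := by
        rw [hT]
        exact mul_le_mul_of_nonneg_left hux (by rw [← hT]; exact hT0)
      have split : T * (((12+4/δ) + (2+2*δ)*S)/(S^2*‖x‖^2))
          = T*(12+4/δ)/(S^2*‖x‖^2) + T*(2+2*δ)/(S*‖x‖^2) := by
        field_simp
      have i1 : T*(12+4/δ)/(S^2*‖x‖^2) ≤ (12+4/δ)/(4*‖x‖^2) * (T/(T + κm)^2) := by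
        have hTnn : 0 ≤ T := by rw [← hT]; exact hT0
        have e1 : (12+4/δ)/(4*‖x‖^2) * (T/(T + κm)^2) = T*(12+4/δ)/((2*(T+κm))^2*‖x‖^2) := by
          field_simp
          ring
        rw [e1]
        apply div_le_div_of_nonneg_left (by positivity) (by positivity)
        have h2 : (2*(T+κm))^2 ≤ S^2 := by nlinarith
        nlinarith
      have i2 : T*(2+2*δ)/(S*‖x‖^2) ≤ (2+2*δ)/(2*‖x‖^2) * (T/(T + κm)) := by
        have hTnn : 0 ≤ T := by rw [← hT]; exact hT0
        have e2 : (2+2*δ)/(2*‖x‖^2) * (T/(T + κm)) = T*(2+2*δ)/((2*(T+κm))*‖x‖^2) := by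
          field_simp
        rw [e2]
        apply div_le_div_of_nonneg_left (by positivity) (by positivity)
        nlinarith
      calc Real.log (1/ε) * u ε x ≤ T * (((12+4/δ) + (2+2*δ)*S)/(S^2*‖x‖^2)) := step1
        _ = T*(12+4/δ)/(S^2*‖x‖^2) + T*(2+2*δ)/(S*‖x‖^2) := split
        _ ≤ (12+4/δ)/(4*‖x‖^2) * (T/(T + κm)^2) + (2+2*δ)/(2*‖x‖^2) * (T/(T + κm)) :=
            add_le_add i1 i2
    exact lt_of_le_of_lt hchain hg'
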